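/- arXiv:1507.04841 — 3 statements merged into one kernel-verified Lean document; each statement's English description precedes it below -/
import Mathlib

section
/- In the setting of the compression lemma: let R be ergodic pmp on (X,μ), Y ⊆ X of positive measure, φ : X → Y a Borel retraction with graph in R, S ≤ R_Y, and T = {(x,y) : (φx, φy) ∈ S}. If S is ergodic on (Y, μ|_Y normalized) then T is ergodic on (X,μ). -/
open MeasureTheory
open ProbabilityTheory

/-- Ergodicity on `X`. -/
def IsErgodicRel {X : Type} [MeasurableSpace X] (μ : Measure X)
    (S : Set (X × X)) : Prop :=
  ∀ A : Set X, MeasurableSet A → (∀ x ∈ A, ∀ y, (x, y) ∈ S → y ∈ A) →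
    μ A = 0 ∨ μ A = 1

/-- The key measure-theoretic fact: if `φ` is measurable with graph inside a countable
pmp equivalence relation `R`, then `φ`-preimages of null sets are null. -/
private lemma preimage_null_aux
    {X : Type} [MeasurableSpace X] [StandardBorelSpace X]
    (μ : Measure X) [IsProbabilityMeasure μ]
    (R : Set (X × X))
    (hrefl : ∀ x, (x, x) ∈ R)
    (hsymm : ∀ ⦃x y⦄, (x, y) ∈ R → (y, x) ∈ R)
    (hcount : ∀ x, {y | (x, y) ∈ R}.Countable)
    (hpmp : ∀ f : X ≃ᵐ X, (∀ᵐ x ∂μ, (x, f x) ∈ R) → MeasurePreserving f μ μ)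
    (φ : X → X) (hφmeas : Measurable φ) (hφR : ∀ x, (x, φ x) ∈ R)
    (N : Set X) (hN : MeasurableSet N) (hN0 : μ N = 0) :
    μ (φ ⁻¹' N) = 0 := by
  classical
  set W : Set X := φ ⁻¹' N \ N with hWdef
  have hWm : MeasurableSet W := (hφmeas hN).diff hN
  suffices hW : μ W = 0 by
    have hsub : φ ⁻¹' N ⊆ W ∪ N := by
      intro x hx
      by_cases h : x ∈ N
      · exact Or.inr h
      · exact Or.inl ⟨hx, h⟩
    refine le_antisymm ?_ zero_le
    calc μ (φ ⁻¹' N) ≤ μ (W ∪ N) := measure_mono hsub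
      _ ≤ μ W + μ N := measure_union_le _ _
      _ = 0 := by rw [hW, hN0, add_zero]
  by_contra hW0
  have hXne : Nonempty X := ⟨(nonempty_of_measure_ne_zero hW0).some⟩
  -- the embedding of `X` into `ℝ`
  set e : X → ℝ := embeddingReal X with hedef
  have he : MeasurableEmbedding e := measurableEmbedding_embeddingReal X
  have hem : Measurable e := he.measurable
  -- disintegrate `μ.restrict W` over `φ`
  set π : X → X × X := fun x => (φ x, x) with hπdef
  have hπm : Measurable π := hφmeas.prodMk measurable_id
  set ρ : Measure (X × X) := (μ.restrict W).map π with hρdef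
  haveI : IsFiniteMeasure ρ := by
    constructor
    rw [hρdef, Measure.map_apply hπm MeasurableSet.univ]
    exact lt_of_le_of_lt (measure_mono (Set.subset_univ _)) (measure_lt_top _ _)
  set κ := ρ.condKernel with hκdef
  set ν := ρ.fst with hνdef
  have hdis : ν ⊗ₘ κ = ρ := ρ.disintegrate κ
  -- the graph set
  set G : Set (X × X) := {p | φ p.2 = p.1 ∧ p.2 ∈ W} with hGdef
  have hGm : MeasurableSet G := by
    have h1 : MeasurableSet {p : X × X | φ p.2 = p.1} := by
      have heq : {p : X × X | φ p.2 = p.1}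
          = {p : X × X | e (φ p.2) = e p.1} := by
        ext p
        exact ⟨fun h => by rw [Set.mem_setOf_eq] at h ⊢; rw [h], fun h => he.injective h⟩
      rw [heq]
      exact measurableSet_eq_fun (hem.comp (hφmeas.comp measurable_snd))
        (hem.comp measurable_fst)
    exact h1.inter (measurable_snd hWm)
  have hρGc : ρ Gᶜ = 0 := by
    rw [hρdef, Measure.map_apply hπm hGm.compl]
    have hsub : π ⁻¹' Gᶜ ⊆ Wᶜ := fun x hx hxW => hx ⟨rfl, hxW⟩
    refine measure_mono_null hsub ?_
    rw [Measure.restrict_apply hWm.compl, Set.compl_inter_self]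
    simp
  have hae : ∀ᵐ y ∂ν, κ y ({x | φ x = y ∧ x ∈ W}ᶜ) = 0 := by
    have hint0 : ∫⁻ y, κ y (Prod.mk y ⁻¹' Gᶜ) ∂ν = 0 := by
      rw [← Measure.compProd_apply hGm.compl, hdis, hρGc]
    have hmeas := ProbabilityTheory.Kernel.measurable_kernel_prodMk_left
      (κ := κ) hGm.compl
    have h := (lintegral_eq_zero_iff hmeas).mp hint0
    filter_upwards [h] with y hy
    exact hy
  -- conditional "quantile" functions
  haveI : IsMarkovKernel κ := by rw [hκdef]; infer_instance
  set η : ProbabilityTheory.Kernel (X × X) X := κ.comap Prod.fst measurable_fst with hηdef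
  haveI : IsMarkovKernel η := ProbabilityTheory.Kernel.IsMarkovKernel.comap κ measurable_fst
  have hum' : Measurable fun p : X × X =>
      η p (Prod.mk p ⁻¹' {q : (X × X) × X | e q.2 < e q.1.2}) :=
    ProbabilityTheory.Kernel.measurable_kernel_prodMk_left
      (measurableSet_lt (hem.comp measurable_snd)
        (hem.comp (measurable_snd.comp measurable_fst)))
  have hvm' : Measurable fun p : X × X =>
      η p (Prod.mk p ⁻¹' {q : (X × X) × X | e q.2 ≤ e q.1.2}) :=
    ProbabilityTheory.Kernel.measurable_kernel_prodMk_left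
      (measurableSet_le (hem.comp measurable_snd)
        (hem.comp (measurable_snd.comp measurable_fst)))
  set u : X → ENNReal := fun x => κ (φ x) {z | e z < e x} with hudef
  set v : X → ENNReal := fun x => κ (φ x) {z | e z ≤ e x} with hvdef
  have hu : Measurable u := by
    have h := hum'.comp hπm
    simp [hηdef, ProbabilityTheory.Kernel.comap_apply] at h
    exact h
  have hv : Measurable v := by
    have h := hvm'.comp hπm
    simp [hηdef, ProbabilityTheory.Kernel.comap_apply] at h
    exact h
  set E : ℚ → Set X := fun q =>
    W ∩ ({x | u x < ENNReal.ofReal q} ∩ {x | ENNReal.ofReal q ≤ v x}) with hEdef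
  have hEm : ∀ q, MeasurableSet (E q) := fun q =>
    hWm.inter ((measurableSet_lt hu measurable_const).inter
      (measurableSet_le measurable_const hv))
  set U : Set X := ⋃ q : ℚ, E q with hUdef
  have hUm : MeasurableSet U := MeasurableSet.iUnion fun q => hEm q
  -- φ is injective on each E q
  have hinj : ∀ q : ℚ, Set.InjOn φ (E q) := by
    intro q x hx x' hx' hxx'
    by_contra hne
    have key : ∀ a b : X, a ∈ E q → b ∈ E q → φ a = φ b → e a < e b → False := by
      intro a b ha hb hab hlt
      have h1 : v a ≤ u b := by
        rw [hudef, hvdef]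
        show κ (φ a) {z | e z ≤ e a} ≤ κ (φ b) {z | e z < e b}
        rw [hab]
        exact measure_mono (fun z hz => lt_of_le_of_lt hz hlt)
      exact absurd (lt_of_le_of_lt (le_trans ha.2.2 h1) hb.2.1) (lt_irrefl _)
    rcases lt_trichotomy (e x) (e x') with h | h | h
    · exact key x x' hx hx' hxx' h
    · exact hne (he.injective h)
    · exact key x' x hx' hx hxx'.symm h
  -- almost every point of W lies in some E q
  have hWU : μ (W \ U) = 0 := by
    have hkey : ∀ᵐ y ∂ν, κ y (W \ U) = 0 := by
      filter_upwards [hae] with y hy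
      set S' : Set X := {x | φ x = y ∧ x ∈ W} with hS'def
      have hsub : W \ U ⊆ (S' \ U) ∪ S'ᶜ := by
        intro x hx
        by_cases hxS : x ∈ S'
        · exact Or.inl ⟨hxS, hx.2⟩
        · exact Or.inr hxS
      have hcnt : (S' \ U).Countable := by
        refine Set.Countable.mono ?_ (hcount y)
        intro x hx
        have h1 : φ x = y := hx.1.1
        have h2 := hφR x
        rw [h1] at h2
        exact hsymm h2
      haveI : IsProbabilityMeasure (κ y) := IsMarkovKernel.isProbabilityMeasure y
      have hzero : ∀ x ∈ S' \ U, κ y {x} = 0 := by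
        intro x hx
        by_contra h0
        obtain ⟨⟨hφx, hxW⟩, hxU⟩ := hx
        have hux : u x = κ y {z | e z < e x} := by rw [hudef]; simp only; rw [hφx]
        have hvx : v x = κ y {z | e z ≤ e x} := by rw [hvdef]; simp only; rw [hφx]
        have hdisj : Disjoint {z | e z < e x} ({x} : Set X) := by
          rw [Set.disjoint_singleton_right, Set.mem_setOf_eq]
          exact lt_irrefl _
        have hsum : u x + κ y {x} ≤ v x := by
          rw [hux, hvx, ← measure_union hdisj (measurableSet_singleton x)]
          refine measure_mono ?_
          intro z hz
          rcases hz with hz | hz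
          · show e z ≤ e x
            exact le_of_lt hz
          · show e z ≤ e x
            rw [Set.mem_singleton_iff] at hz
            rw [hz]
        have hutop : u x ≠ ⊤ := measure_ne_top _ _
        have hvtop : v x ≠ ⊤ := measure_ne_top _ _
        have huv : u x < v x :=
          lt_of_lt_of_le (ENNReal.lt_add_right hutop h0) hsum
        have htr : (u x).toReal < (v x).toReal :=
          (ENNReal.toReal_lt_toReal hutop hvtop).mpr huv
        obtain ⟨q, hq1, hq2⟩ := exists_rat_btwn htr
        have h1 : u x < ENNReal.ofReal q := by
          rw [← ENNReal.ofReal_toReal hutop]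
          exact (ENNReal.ofReal_lt_ofReal_iff_of_nonneg ENNReal.toReal_nonneg).mpr hq1
        have h2 : ENNReal.ofReal q ≤ v x :=
          ENNReal.ofReal_le_of_le_toReal (le_of_lt hq2)
        exact hxU (Set.mem_iUnion.mpr ⟨q, hxW, h1, h2⟩)
      have hS'U : κ y (S' \ U) = 0 := by
        rw [← Set.biUnion_of_singleton (S' \ U)]
        exact (measure_biUnion_null_iff hcnt).mpr hzero
      refine le_antisymm ?_ zero_le
      calc κ y (W \ U) ≤ κ y ((S' \ U) ∪ S'ᶜ) := measure_mono hsub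
        _ ≤ κ y (S' \ U) + κ y S'ᶜ := measure_union_le _ _
        _ = 0 := by rw [hS'U, hy, add_zero]
    have h1 : ρ (Prod.snd ⁻¹' (W \ U)) = 0 := by
      rw [← hdis, Measure.compProd_apply (measurable_snd (hWm.diff hUm))]
      have hfun : (fun y => κ y (Prod.mk y ⁻¹' (Prod.snd ⁻¹' (W \ U))))
          = fun y => κ y (W \ U) := rfl
      rw [hfun, lintegral_congr_ae hkey, lintegral_zero]
    have h2 : μ (W \ U) = ρ (Prod.snd ⁻¹' (W \ U)) := by
      rw [hρdef, Measure.map_apply hπm (measurable_snd (hWm.diff hUm))]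
      have hpre : π ⁻¹' (Prod.snd ⁻¹' (W \ U)) = W \ U := rfl
      rw [hpre, Measure.restrict_apply (hWm.diff hUm),
        Set.inter_eq_left.mpr Set.diff_subset]
    rw [h2, h1]
  -- pick a q with positive measure
  obtain ⟨q, hq⟩ : ∃ q : ℚ, μ (E q) ≠ 0 := by
    by_contra h
    push_neg at h
    have hU0 : μ U = 0 := measure_iUnion_null h
    have hle : μ W ≤ μ (W \ U) + μ U := by
      refine le_trans (measure_mono ?_) (measure_union_le _ _)
      intro x hx
      by_cases hxU : x ∈ U
      · exact Or.inr hxU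
      · exact Or.inl ⟨hx, hxU⟩
    rw [hWU, hU0, add_zero] at hle
    exact hW0 (le_antisymm hle zero_le)
  -- build a measurable involution swapping `E q` and `φ '' E q`
  have hEqW : E q ⊆ W := fun x hx => hx.1
  have hEqN : ∀ x ∈ E q, x ∉ N := fun x hx => (hEqW hx).2
  have hEqφN : ∀ x ∈ E q, φ x ∈ N := fun x hx => (hEqW hx).1
  haveI : StandardBorelSpace (E q) := (hEm q).standardBorel
  set ψ : E q → X := (E q).restrict φ with hψdef
  have hψm : Measurable ψ := hφmeas.comp measurable_subtype_coe
  have hψinj : Function.Injective ψ := (hinj q).injective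
  have hemb : MeasurableEmbedding ψ := hψm.measurableEmbedding hψinj
  obtain ⟨σ, hσm, hσψ⟩ := hemb.exists_measurable_extend
    (measurable_subtype_coe) (fun x => ⟨x⟩)
  set I : Set X := Set.range ψ with hIdef
  have hIm : MeasurableSet I := hemb.measurableSet_range
  have hIN : I ⊆ N := by
    rintro _ ⟨z, rfl⟩
    exact hEqφN _ z.2
  have hEI : ∀ x, x ∈ E q → x ∉ I := fun x hx hxI => hEqN x hx (hIN hxI)
  set g : X → X := fun x => if x ∈ E q then φ x else if x ∈ I then σ x else x
    with hgdef
  have hgm : Measurable g :=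
    Measurable.ite (hEm q) hφmeas (Measurable.ite hIm hσm measurable_id)
  have hgE : ∀ x, x ∈ E q → g x = φ x := fun x hx => if_pos hx
  have hgI : ∀ x, x ∉ E q → x ∈ I → g x = σ x := fun x hx hx' => by
    rw [hgdef]; simp only [if_neg hx, if_pos hx']
  have hgelse : ∀ x, x ∉ E q → x ∉ I → g x = x := fun x hx hx' => by
    rw [hgdef]; simp only [if_neg hx, if_neg hx']
  have hσI : ∀ z : E q, σ (ψ z) = ↑z := fun z => congrFun hσψ z
  have hinvI : ∀ x, x ∈ I → σ x ∈ E q ∧ φ (σ x) = x := by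
    rintro _ ⟨z, rfl⟩
    rw [hσI z]
    exact ⟨z.2, rfl⟩
  have hφEI : ∀ x, x ∈ E q → φ x ∈ I := fun x hx => ⟨⟨x, hx⟩, rfl⟩
  have hginvol : Function.Involutive g := by
    intro x
    by_cases hx : x ∈ E q
    · rw [hgE x hx]
      have h1 : φ x ∈ I := hφEI x hx
      have h2 : φ x ∉ E q := fun h => hEqN _ h (hIN h1)
      rw [hgI _ h2 h1]
      exact hσI ⟨x, hx⟩
    · by_cases hx' : x ∈ I
      · rw [hgI x hx hx']
        obtain ⟨hσE, hφσ⟩ := hinvI x hx'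
        rw [hgE _ hσE, hφσ]
      · rw [hgelse x hx hx', hgelse x hx hx']
  set f : X ≃ᵐ X :=
    ⟨⟨g, g, hginvol.leftInverse, hginvol.rightInverse⟩, hgm, hgm⟩ with hfdef
  have hgraph : ∀ᵐ x ∂μ, (x, f x) ∈ R := by
    refine Filter.Eventually.of_forall (fun x => ?_)
    show (x, g x) ∈ R
    by_cases hx : x ∈ E q
    · rw [hgE x hx]; exact hφR x
    · by_cases hx' : x ∈ I
      · rw [hgI x hx hx']
        obtain ⟨hσE, hφσ⟩ := hinvI x hx'
        have h := hφR (σ x)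
        rw [hφσ] at h
        exact hsymm h
      · rw [hgelse x hx hx']; exact hrefl x
  have hmp := hpmp f hgraph
  have hpre : g ⁻¹' I = E q := by
    ext x
    constructor
    · intro hx
      by_cases h1 : x ∈ E q
      · exact h1
      · exfalso
        by_cases h2 : x ∈ I
        · rw [Set.mem_preimage, hgI x h1 h2] at hx
          exact hEI _ (hinvI x h2).1 hx
        · rw [Set.mem_preimage, hgelse x h1 h2] at hx
          exact h2 hx
    · intro hx
      rw [Set.mem_preimage, hgE x hx]
      exact hφEI x hx
  have hEqI : μ (E q) = μ I := by
    have h := hmp.measure_preimage hIm.nullMeasurableSet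
    have hfg : ⇑f ⁻¹' I = g ⁻¹' I := rfl
    rw [hfg, hpre] at h
    exact h
  exact hq (by rw [hEqI]; exact measure_mono_null hIN hN0)

/-- in the setting of the compression lemma, if `S ≤ R_Y` is
ergodic on `(Y, μ|_Y)` then the extension `T = {(x,y) : (φx, φy) ∈ S}` is
ergodic on `(X, μ)`. -/
theorem compression_extension_ergodic
    {X : Type} [MeasurableSpace X] [StandardBorelSpace X]
    (μ : Measure X) [IsProbabilityMeasure μ]
    (R : Set (X × X)) (hRmeas : MeasurableSet R)
    (hrefl : ∀ x, (x, x) ∈ R)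
    (hsymm : ∀ ⦃x y⦄, (x, y) ∈ R → (y, x) ∈ R)
    (htrans : ∀ ⦃x y z⦄, (x, y) ∈ R → (y, z) ∈ R → (x, z) ∈ R)
    (hcount : ∀ x, {y | (x, y) ∈ R}.Countable)
    (hpmp : ∀ f : X ≃ᵐ X, (∀ᵐ x ∂μ, (x, f x) ∈ R) → MeasurePreserving f μ μ)
    (herg : IsErgodicRel μ R)
    (Y : Set X) (hYmeas : MeasurableSet Y) (hYpos : 0 < μ Y)
    (S : Set (X × X)) (hSmeas : MeasurableSet S)
    (hSsub : S ⊆ R ∩ Y ×ˢ Y)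
    (hSrefl : ∀ y ∈ Y, (y, y) ∈ S)
    (hSsymm : ∀ ⦃x y⦄, (x, y) ∈ S → (y, x) ∈ S)
    (hStrans : ∀ ⦃x y z⦄, (x, y) ∈ S → (y, z) ∈ S → (x, z) ∈ S)
    (hSerg : ∀ A : Set X, A ⊆ Y → MeasurableSet A →
      (∀ x ∈ A, ∀ y, (x, y) ∈ S → y ∈ A) → μ A = 0 ∨ μ A = μ Y)
    (φ : X → X) (hφmeas : Measurable φ)
    (hφY : ∀ x, φ x ∈ Y) (hφR : ∀ x, (x, φ x) ∈ R)
    (hφfix : ∀ y ∈ Y, φ y = y) :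
    IsErgodicRel μ {p : X × X | (φ p.1, φ p.2) ∈ S} := by
  intro A hA hAsat
  set B : Set X := A ∩ Y with hBdef
  have hBm : MeasurableSet B := hA.inter hYmeas
  have hφφ : ∀ x, φ (φ x) = φ x := fun x => hφfix _ (hφY x)
  have hAiff : ∀ x, x ∈ A ↔ φ x ∈ B := by
    intro x
    constructor
    · intro hx
      refine ⟨hAsat x hx (φ x) ?_, hφY x⟩
      show (φ x, φ (φ x)) ∈ S
      rw [hφφ]
      exact hSrefl _ (hφY x)
    · intro hx
      refine hAsat (φ x) hx.1 x ?_
      show (φ (φ x), φ x) ∈ S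
      rw [hφφ]
      exact hSrefl _ (hφY x)
  have hAeq : A = φ ⁻¹' B := Set.ext fun x => hAiff x
  have hBsat : ∀ x ∈ B, ∀ y, (x, y) ∈ S → y ∈ B := by
    intro x hx y hxy
    have hyY : y ∈ Y := (hSsub hxy).2.2
    have hmem : (φ x, φ y) ∈ S := by
      rw [hφfix x hx.2, hφfix y hyY]
      exact hxy
    exact ⟨hAsat x hx.1 y hmem, hyY⟩
  rcases hSerg B Set.inter_subset_right hBm hBsat with h0 | hfull
  · left
    rw [hAeq]
    exact preimage_null_aux μ R hrefl hsymm hcount hpmp φ hφmeas hφR B hBm h0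
  · right
    have hYB : μ (Y \ B) = 0 := by
      rw [measure_diff Set.inter_subset_right hBm.nullMeasurableSet (measure_ne_top μ B),
        hfull, tsub_self]
    have hcomp : Aᶜ = φ ⁻¹' (Y \ B) := by
      ext x
      simp only [Set.mem_compl_iff, hAiff x, Set.mem_preimage, Set.mem_diff]
      exact ⟨fun h => ⟨hφY x, h⟩, fun h => h.2⟩
    have h0 : μ Aᶜ = 0 := by
      rw [hcomp]
      exact preimage_null_aux μ R hrefl hsymm hcount hpmp φ hφmeas hφR (Y \ B)
        (hYmeas.diff hBm) hYB
    have hc := measure_compl hA (measure_ne_top μ A)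
    rw [measure_univ, h0] at hc
    have h1 : (1 : ENNReal) ≤ μ A := tsub_eq_zero_iff_le.mp hc.symm
    exact le_antisymm prob_le_one h1
end

section
/- Let G be a countably infinite group acting essentially freely, ergodically, and measure-preservingly on a nonatomic standard probability space (X,μ), let H be a countable group, ρ : G → H an injective homomorphism, and φ : X → H a Borel map. Define the cocycle c(g,x) = φ(gx)⁻¹ρ(g)φ(x) on the orbit equivalence relation. Then the subequivalence relation N = {(gx, x) : c(g,x) = e} (the kernel of c) has finite classes almost everywhere, and in particular N is not ergodic. -/
open MeasureTheory
open scoped ENNReal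

/-- In a countably separated space with a nonatomic measure, every set of positive
measure splits into two pieces of positive measure. -/
lemma exists_split_subset {X : Type} [MeasurableSpace X]
    [MeasurableSpace.CountablySeparated X]
    (μ : Measure X) [IsFiniteMeasure μ] [NullSingletonClass μ]
    {A : Set X} (hA : MeasurableSet A) (h0 : μ A ≠ 0) :
    ∃ B, B ⊆ A ∧ MeasurableSet B ∧ μ B ≠ 0 ∧ μ (A \ B) ≠ 0 := by
  classical
  by_contra hc
  push_neg at hc
  obtain ⟨S, Scnt, Smeas, hsep⟩ :=
    exists_countable_separating X MeasurableSet Set.univ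
  have hCs : ∀ s ∈ S, μ (A \ (if μ (A ∩ s) = 0 then sᶜ else s)) = 0 := by
    intro s hs
    by_cases h : μ (A ∩ s) = 0
    · simp only [h, if_pos]
      have : A \ sᶜ = A ∩ s := by ext x; simp [Set.mem_diff]
      rwa [this]
    · simp only [h, if_neg]
      have h2 := hc (A ∩ s) Set.inter_subset_left (hA.inter (Smeas s hs)) h
      have he : A \ (A ∩ s) = A \ s := Set.diff_self_inter
      rwa [he] at h2
  set D : Set X := A ∩ ⋂ s ∈ S, (if μ (A ∩ s) = 0 then sᶜ else s) with hD
  have hADnull : μ (A \ D) = 0 := by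
    have hsub : A \ D ⊆ ⋃ s ∈ S, (A \ (if μ (A ∩ s) = 0 then sᶜ else s)) := by
      intro x hx
      rcases hx with ⟨hxA, hxD⟩
      have hnx : ¬ x ∈ ⋂ s ∈ S, (if μ (A ∩ s) = 0 then sᶜ else s) := fun h => hxD ⟨hxA, h⟩
      simp only [Set.mem_iInter, not_forall] at hnx
      obtain ⟨s, hs, hxs⟩ := hnx
      exact Set.mem_biUnion hs ⟨hxA, hxs⟩
    refine measure_mono_null hsub ?_
    have := Scnt.to_subtype
    rw [Set.biUnion_eq_iUnion]
    exact measure_iUnion_null fun s => hCs s s.2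
  have hDpos : μ D ≠ 0 := by
    intro hD0
    have : μ A ≤ μ D + μ (A \ D) := by
      refine (measure_mono ?_).trans (measure_union_le _ _)
      intro x hx; by_cases h : x ∈ D
      · exact Set.mem_union_left _ h
      · exact Set.mem_union_right _ ⟨hx, h⟩
    rw [hD0, hADnull, add_zero] at this
    exact h0 (le_antisymm this zero_le)
  have hDsub : D.Subsingleton := by
    intro x hx y hy
    refine hsep x (Set.mem_univ x) y (Set.mem_univ y) fun s hs => ?_
    have hxs := Set.mem_iInter₂.mp hx.2 s hs
    have hys := Set.mem_iInter₂.mp hy.2 s hs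
    by_cases h : μ (A ∩ s) = 0
    · simp only [h, if_pos] at hxs hys
      exact ⟨fun hxin => absurd hxin hxs, fun hyin => absurd hyin hys⟩
    · simp only [h, if_neg] at hxs hys
      exact ⟨fun _ => hys, fun _ => hxs⟩
  exact hDpos (hDsub.measure_zero μ)

/-- Nonatomic probability measures have sets of arbitrarily small positive measure
inside any positive-measure set. -/
lemma exists_small_subset {X : Type} [MeasurableSpace X]
    [MeasurableSpace.CountablySeparated X]
    (μ : Measure X) [IsProbabilityMeasure μ] [NullSingletonClass μ]
    {A : Set X} (hA : MeasurableSet A) (h0 : μ A ≠ 0) {ε : ℝ≥0∞} (hε : ε ≠ 0) :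
    ∃ B, B ⊆ A ∧ MeasurableSet B ∧ μ B ≠ 0 ∧ μ B < ε := by
  have half : ∀ C : Set X, MeasurableSet C → μ C ≠ 0 →
      ∃ B, B ⊆ C ∧ MeasurableSet B ∧ μ B ≠ 0 ∧ μ B ≤ μ C / 2 := by
    intro C hC h0C
    obtain ⟨B, hBC, hBm, hB0, hCB0⟩ := exists_split_subset μ hC h0C
    by_cases hle : μ B ≤ μ C / 2
    · exact ⟨B, hBC, hBm, hB0, hle⟩
    · refine ⟨C \ B, Set.diff_subset, hC.diff hBm, hCB0, ?_⟩
      have hfin : μ B ≠ ⊤ := (measure_lt_top μ B).ne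
      rw [measure_diff hBC hBm.nullMeasurableSet hfin]
      push_neg at hle
      calc μ C - μ B ≤ μ C - μ C / 2 := tsub_le_tsub_left hle.le _
        _ = μ C / 2 := ENNReal.sub_half (measure_lt_top μ C).ne
  have iter : ∀ n : ℕ, ∃ B, B ⊆ A ∧ MeasurableSet B ∧ μ B ≠ 0 ∧ μ B ≤ μ A / 2 ^ n := by
    intro n
    induction n with
    | zero => exact ⟨A, subset_rfl, hA, h0, by simp⟩
    | succ n ih =>
      obtain ⟨B, hBA, hBm, hB0, hBle⟩ := ih
      obtain ⟨B', hB'B, hB'm, hB'0, hB'le⟩ := half B hBm hB0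
      refine ⟨B', hB'B.trans hBA, hB'm, hB'0, ?_⟩
      calc μ B' ≤ μ B / 2 := hB'le
        _ ≤ (μ A / 2 ^ n) / 2 := by gcongr
        _ = μ A / 2 ^ (n + 1) := by
            rw [div_eq_mul_inv, div_eq_mul_inv, div_eq_mul_inv, mul_assoc,
              ← ENNReal.mul_inv (by simp) (by simp), pow_succ]
  obtain ⟨n, hn⟩ := ENNReal.exists_inv_two_pow_lt hε
  obtain ⟨B, hBA, hBm, hB0, hBle⟩ := iter n
  refine ⟨B, hBA, hBm, hB0, lt_of_le_of_lt (hBle.trans ?_) hn⟩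
  calc μ A / 2 ^ n ≤ 1 / 2 ^ n := by gcongr; exact prob_le_one
    _ = 2⁻¹ ^ n := by rw [one_div, ← ENNReal.inv_pow]

set_option maxHeartbeats 1000000 in
/-- let a countably infinite group `G` act essentially freely,
ergodically and p.m.p. on a nonatomic probability space, `ρ : G → H` an
injective homomorphism into a countable group, `φ : X → H` Borel, and
`c(g,x) = φ(gx)⁻¹ ρ(g) φ(x)`.  Then the kernel
`N = {(gx, x) : c(g,x) = e}` has finite classes a.e.; in particular `N` is not
ergodic. -/
theorem kernel_of_injective_untwisted_cocycle_finite
    {X : Type} [MeasurableSpace X] [StandardBorelSpace X]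
    (μ : Measure X) [IsProbabilityMeasure μ] [NullSingletonClass μ]
    (G : Type) [Group G] [Countable G] [Infinite G] [MulAction G X]
    (hmeas : ∀ g : G, Measurable fun x : X => g • x)
    (hmp : ∀ g : G, MeasurePreserving (fun x : X => g • x) μ μ)
    (hfree : ∀ᵐ x ∂μ, ∀ g : G, g • x = x → g = 1)
    (hergodic : ∀ A : Set X, MeasurableSet A →
      (∀ (g : G) (x : X), x ∈ A → g • x ∈ A) → μ A = 0 ∨ μ A = 1)
    (H : Type) [Group H] [Countable H]
    (ρ : G →* H) (hρ : Function.Injective ρ)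
    (φ : X → H) (hφmeas : ∀ h : H, MeasurableSet {x | φ x = h}) :
    (∀ᵐ x ∂μ,
      {y | ∃ g : G, y = g • x ∧ (φ (g • x))⁻¹ * ρ g * φ x = 1}.Finite) ∧
    ¬ IsErgodicRel μ
      {p : X × X | ∃ g : G, p.1 = g • p.2 ∧ (φ (g • p.2))⁻¹ * ρ g * φ p.2 = 1} := by
  classical
  set s : H → G → Set X := fun h g => {x | φ x = h ∧ φ (g • x) = ρ g * h} with hs
  have smeas : ∀ h g, MeasurableSet (s h g) := by
    intro h g
    have : s h g = {x | φ x = h} ∩ (fun x => g • x) ⁻¹' {x | φ x = ρ g * h} := rfl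
    rw [this]
    exact (hφmeas h).inter ((hmeas g) (hφmeas (ρ g * h)))
  -- the translated sets are pairwise disjoint, so the measures of the `s h g` sum to ≤ 1
  have sumbound : ∀ h : H, ∑' g : G, μ (s h g) ≤ 1 := by
    intro h
    set U : G → Set X := fun g => (fun y => g⁻¹ • y) ⁻¹' s h g with hU
    have Umeas : ∀ g, MeasurableSet (U g) := fun g => (hmeas g⁻¹) (smeas h g)
    have Ueq : ∀ g, μ (U g) = μ (s h g) := fun g =>
      (hmp g⁻¹).measure_preimage (smeas h g).nullMeasurableSet
    have Udisj : Pairwise (Function.onFun Disjoint U) := by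
      intro g₁ g₂ hne
      rw [Function.onFun, Set.disjoint_left]
      intro y h1 h2
      apply hne
      apply hρ
      have e1 : φ y = ρ g₁ * h := by
        have := h1.2
        rwa [smul_inv_smul] at this
      have e2 : φ y = ρ g₂ * h := by
        have := h2.2
        rwa [smul_inv_smul] at this
      exact mul_right_cancel (e1.symm.trans e2)
    calc ∑' g : G, μ (s h g) = ∑' g : G, μ (U g) := by
          exact (tsum_congr fun g => (Ueq g).symm)
      _ = μ (⋃ g, U g) := (measure_iUnion Udisj Umeas).symm
      _ ≤ 1 := by
          rw [← measure_univ (μ := μ)]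
          exact measure_mono (Set.subset_univ _)
  have sumne : ∀ h : H, ∑' g : G, μ (s h g) ≠ ∞ :=
    fun h => (lt_of_le_of_lt (sumbound h) ENNReal.one_lt_top).ne
  -- Part 1: Borel–Cantelli
  have part1 : ∀ᵐ x ∂μ, ∀ h : H, {g : G | x ∈ s h g}.Finite := by
    rw [ae_all_iff]
    intro h
    exact ae_finite_setOf_mem (sumne h)
  have fin : ∀ᵐ x ∂μ,
      {y | ∃ g : G, y = g • x ∧ (φ (g • x))⁻¹ * ρ g * φ x = 1}.Finite := by
    filter_upwards [part1] with x hx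
    have hsub : {y | ∃ g : G, y = g • x ∧ (φ (g • x))⁻¹ * ρ g * φ x = 1}
        ⊆ (fun g : G => g • x) '' {g : G | x ∈ s (φ x) g} := by
      rintro y ⟨g, rfl, hg⟩
      refine ⟨g, ⟨rfl, ?_⟩, rfl⟩
      rw [mul_assoc] at hg
      exact inv_mul_eq_one.mp hg
    exact ((hx (φ x)).image _).subset hsub
  refine ⟨fin, ?_⟩
  intro hErg
  -- choose a value of φ with positive measure
  obtain ⟨h₀, hh₀⟩ : ∃ h : H, μ {x | φ x = h} ≠ 0 := by
    by_contra hcon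
    push_neg at hcon
    have h1 : μ (⋃ h : H, {x | φ x = h}) = 0 := measure_iUnion_null hcon
    have h2 : (⋃ h : H, {x | φ x = h}) = Set.univ := by
      ext x; simp
    rw [h2, measure_univ] at h1
    exact one_ne_zero h1
  -- tail of the sum is small
  obtain ⟨F, hF⟩ : ∃ F : Finset G, ∑' g : {g : G // g ∉ F}, μ (s h₀ g) < 4⁻¹ := by
    have ht := ENNReal.tendsto_tsum_compl_atTop_zero (sumne h₀)
    have h4 : (0 : ℝ≥0∞) < 4⁻¹ := by norm_num
    exact ((tendsto_order.1 ht).2 _ h4).exists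
  -- a small positive subset of {φ = h₀}
  set δ : ℝ≥0∞ := 4⁻¹ / ((F.card : ℝ≥0∞) + 1) with hδ
  have hδ0 : δ ≠ 0 := by
    rw [hδ]
    simp [ENNReal.div_eq_zero_iff, ENNReal.add_eq_top]
  obtain ⟨B, hBsub, hBmeas, hB0, hBlt⟩ := exists_small_subset μ (hφmeas h₀) hh₀ hδ0
  -- the saturation of B under the kernel relation
  set A : Set X := {y | ∃ g : G, g • y ∈ B ∧ φ (g • y) = ρ g * φ y} with hA
  have Ameas : MeasurableSet A := by
    have hAeq : A = ⋃ g : G, (((fun y => g • y) ⁻¹' B) ∩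
        ⋃ h : H, ({y | φ y = h} ∩ (fun y => g • y) ⁻¹' {z | φ z = ρ g * h})) := by
      ext y
      simp only [hA, Set.mem_setOf_eq, Set.mem_iUnion, Set.mem_inter_iff, Set.mem_preimage]
      constructor
      · rintro ⟨g, hgB, hgφ⟩
        exact ⟨g, hgB, φ y, rfl, hgφ⟩
      · rintro ⟨g, hgB, h, hyh, hgφ⟩
        exact ⟨g, hgB, by rw [hgφ, hyh]⟩
    rw [hAeq]
    exact MeasurableSet.iUnion fun g => ((hmeas g) hBmeas).inter
      (MeasurableSet.iUnion fun h => (hφmeas h).inter ((hmeas g) (hφmeas _)))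
  have Ainv : ∀ x ∈ A, ∀ y, (x, y) ∈
      {p : X × X | ∃ g : G, p.1 = g • p.2 ∧ (φ (g • p.2))⁻¹ * ρ g * φ p.2 = 1} → y ∈ A := by
    rintro x ⟨g₁, hg₁B, hg₁φ⟩ y ⟨g, hxy', hgφ'⟩
    have hxy : x = g • y := hxy'
    have hgφ : (φ (g • y))⁻¹ * ρ g * φ y = 1 := hgφ'
    have hφg : φ (g • y) = ρ g * φ y := by
      rw [mul_assoc] at hgφ
      exact inv_mul_eq_one.mp hgφ
    refine ⟨g₁ * g, ?_, ?_⟩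
    · rw [mul_smul, ← hxy]; exact hg₁B
    · rw [mul_smul, ← hxy, hg₁φ, map_mul, hxy, hφg, mul_assoc]
  have hBA : B ⊆ A := by
    intro y hy
    exact ⟨1, by simpa [one_smul] using hy, by simp⟩
  -- upper bound on μ A
  have Asub : A ⊆ ⋃ g : G, (fun y => g⁻¹ • y) ⁻¹' (B ∩ s h₀ g) := by
    rintro y ⟨g, hgB, hgφ⟩
    refine Set.mem_iUnion.mpr ⟨g⁻¹, ?_⟩
    simp only [Set.mem_preimage, inv_inv]
    refine ⟨hgB, hBsub hgB, ?_⟩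
    rw [inv_smul_smul, map_inv, eq_inv_mul_iff_mul_eq]
    exact hgφ.symm.trans (hBsub hgB)
  have hμA : μ A ≤ ∑' g : G, μ (B ∩ s h₀ g) := by
    refine (measure_mono Asub).trans ((measure_iUnion_le _).trans ?_)
    refine le_of_eq (tsum_congr fun g => ?_)
    exact (hmp g⁻¹).measure_preimage (hBmeas.inter (smeas h₀ g)).nullMeasurableSet
  have hsplit : ∑' g : G, μ (B ∩ s h₀ g)
      = ∑ g ∈ F, μ (B ∩ s h₀ g) + ∑' g : {g : G // g ∉ F}, μ (B ∩ s h₀ g) :=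
    by
      rw [← Summable.tsum_add_tsum_compl (s := (F : Set G)) ENNReal.summable ENNReal.summable]
      congr 1
      exact Finset.tsum_subtype' F fun g => μ (B ∩ s h₀ g)
  have hhead : ∑ g ∈ F, μ (B ∩ s h₀ g) ≤ (F.card : ℝ≥0∞) * μ B := by
    calc ∑ g ∈ F, μ (B ∩ s h₀ g) ≤ ∑ _g ∈ F, μ B :=
          Finset.sum_le_sum fun g _ => measure_mono Set.inter_subset_left
      _ = (F.card : ℝ≥0∞) * μ B := by rw [Finset.sum_const, nsmul_eq_mul]
  have htail : ∑' g : {g : G // g ∉ F}, μ (B ∩ s h₀ g) ≤ 4⁻¹ := by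
    refine le_trans (Summable.tsum_le_tsum (fun g => measure_mono Set.inter_subset_right)
      ENNReal.summable ENNReal.summable) hF.le
  have hheadlt : (F.card : ℝ≥0∞) * μ B ≤ 4⁻¹ := by
    have h1 : (F.card : ℝ≥0∞) * μ B ≤ ((F.card : ℝ≥0∞) + 1) * δ := by
      exact mul_le_mul' (le_add_of_nonneg_right zero_le) hBlt.le
    have h2 : ((F.card : ℝ≥0∞) + 1) * δ = 4⁻¹ := by
      rw [hδ]
      exact ENNReal.mul_div_cancel' (by simp) (by simp [ENNReal.add_eq_top])
    rw [h2] at h1; exact h1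
  have hAlt : μ A < 1 := by
    calc μ A ≤ ∑ g ∈ F, μ (B ∩ s h₀ g) + ∑' g : {g : G // g ∉ F}, μ (B ∩ s h₀ g) := by
          rw [← hsplit]; exact hμA
      _ ≤ 4⁻¹ + 4⁻¹ := add_le_add (hhead.trans hheadlt) htail
      _ < 2⁻¹ + 2⁻¹ := by
          have h24 : (2 : ℝ≥0∞) < 4 := by norm_num
          exact ENNReal.add_lt_add (ENNReal.inv_lt_inv.mpr h24) (ENNReal.inv_lt_inv.mpr h24)
      _ = 1 := ENNReal.inv_two_add_inv_two
  rcases hErg A Ameas Ainv with h | h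
  · exact hB0 (le_antisymm (h ▸ measure_mono hBA) zero_le)
  · exact hAlt.ne h
end

section
/- Let G be a countably infinite group with no nontrivial finite quotients, acting essentially freely, ergodically, and pmp on (X,μ) with orbit equivalence relation R, and suppose the action is cocycle superrigid. Then R has no proper finite-index ergodic normal subequivalence relation; combined with the reduction from finite-index ergodic subrelations to normal ones, R has no proper finite-index ergodic subequivalence relation at all. -/
open MeasureTheory

noncomputable section AuxSR

variable {X G : Type} [Group G] [MulAction G X]

/-- the relation on `G` induced by `S` at the point `x`. -/
def relF (S : Set (X × X)) (x : X) (a b : G) : Prop := (a • x, b • x) ∈ S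

open Classical in
/-- index of first enumerated element related to `a` at `x`. -/
def idxF (S : Set (X × X)) (u : ℕ → G) (x : X) (a : G) : ℕ :=
  if h : ∃ n, relF S x (u n) a then Nat.find h else 0

open Classical in
/-- label of the class of `a`: number of classes appearing before it. -/
def labF (S : Set (X × X)) (u : ℕ → G) (x : X) (a : G) : ℕ :=
  ((Finset.range (idxF S u x a)).filter (fun k => idxF S u x (u k) = k)).card

/-- set of "new indices" at `x`. -/
def NIF (S : Set (X × X)) (u : ℕ → G) (x : X) : Set ℕ :=
  {k | idxF S u x (u k) = k}

/-- points where the number of classes is exactly `n`. -/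
def BF (S : Set (X × X)) (u : ℕ → G) (n : ℕ) : Set X :=
  {x | (NIF S u x).Finite ∧ (NIF S u x).ncard = n}

open Classical in
/-- index of a representative of class labeled `j`. -/
def ridxF (S : Set (X × X)) (u : ℕ → G) (x : X) (j : ℕ) : ℕ :=
  if h : ∃ k, labF S u x (u k) = j then Nat.find h else 0

/-- the ℕ-valued index cocycle. -/
def FnatF (S : Set (X × X)) (u : ℕ → G) (g : G) (x : X) (j : ℕ) : ℕ :=
  labF S u (g • x) (u (ridxF S u x j) * g⁻¹)

section Lemmas
set_option linter.unusedSectionVars false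

variable {S : Set (X × X)} {u : ℕ → G}
  (hrefl : ∀ p : X, (p, p) ∈ S)
  (hsymm : ∀ ⦃p q : X⦄, (p, q) ∈ S → (q, p) ∈ S)
  (htrans : ∀ ⦃p q r : X⦄, (p, q) ∈ S → (q, r) ∈ S → (p, r) ∈ S)
  (hu : Function.Surjective u) (hu0 : u 0 = 1)

theorem relF_smul {x : X} {a b : G} (g : G) :
    relF S (g • x) a b ↔ relF S x (a * g) (b * g) := by
  simp only [relF, mul_smul]

include hrefl hsymm htrans hu hu0

theorem relF_refl (x : X) (a : G) : relF S x a a := hrefl _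

theorem relF_symm' {x : X} {a b : G} (h : relF S x a b) : relF S x b a := hsymm h

theorem idxF_exists (x : X) (a : G) : ∃ n, relF S x (u n) a := by
  obtain ⟨n, rfl⟩ := hu a
  exact ⟨n, hrefl _⟩

open Classical in
theorem idxF_eq_find (x : X) (a : G) :
    idxF S u x a = Nat.find (idxF_exists hrefl hsymm htrans hu hu0 x a) := by
  rw [idxF, dif_pos]

open Classical in
theorem idxF_spec (x : X) (a : G) : relF S x (u (idxF S u x a)) a := by
  rw [idxF_eq_find hrefl hsymm htrans hu hu0]
  exact Nat.find_spec (idxF_exists hrefl hsymm htrans hu hu0 x a)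

open Classical in
theorem idxF_min {x : X} {a : G} {k : ℕ} (h : relF S x (u k) a) :
    idxF S u x a ≤ k := by
  rw [idxF_eq_find hrefl hsymm htrans hu hu0]
  exact Nat.find_min' _ h

theorem idxF_eq_of_rel {x : X} {a b : G} (h : relF S x a b) :
    idxF S u x a = idxF S u x b := by
  apply le_antisymm
  · exact idxF_min hrefl hsymm htrans hu hu0
      (htrans (idxF_spec hrefl hsymm htrans hu hu0 x b) (hsymm h))
  · exact idxF_min hrefl hsymm htrans hu hu0
      (htrans (idxF_spec hrefl hsymm htrans hu hu0 x a) h)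

theorem idxF_idem (x : X) (a : G) :
    idxF S u x (u (idxF S u x a)) = idxF S u x a := by
  apply le_antisymm
  · exact idxF_min hrefl hsymm htrans hu hu0 (hrefl _)
  · exact le_of_eq
      (idxF_eq_of_rel hrefl hsymm htrans hu hu0 (idxF_spec hrefl hsymm htrans hu hu0 x a)).symm

theorem idxF_mem_NIF (x : X) (a : G) : idxF S u x a ∈ NIF S u x :=
  idxF_idem hrefl hsymm htrans hu hu0 x a

theorem idxF_one (x : X) : idxF S u x 1 = 0 := by
  have h : relF S x (u 0) 1 := by rw [hu0]; exact hrefl _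
  exact Nat.le_zero.1 (idxF_min hrefl hsymm htrans hu hu0 h)

theorem labF_eq_of_rel {x : X} {a b : G} (h : relF S x a b) :
    labF S u x a = labF S u x b := by
  unfold labF
  rw [idxF_eq_of_rel hrefl hsymm htrans hu hu0 h]

theorem labF_one (x : X) : labF S u x (1 : G) = 0 := by
  unfold labF
  rw [idxF_one hrefl hsymm htrans hu hu0]
  simp

theorem zero_mem_NIF (x : X) : 0 ∈ NIF S u x := by
  have h : idxF S u x (u 0) = idxF S u x 1 := by rw [hu0]
  have := idxF_one hrefl hsymm htrans hu hu0 x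
  simp only [NIF, Set.mem_setOf_eq, h]
  omega

theorem labF_eq_zero_rel {x : X} {a : G} (h : labF S u x a = 0) : relF S x a 1 := by
  have h0 : idxF S u x a = 0 := by
    by_contra hne
    have hpos : 0 < idxF S u x a := Nat.pos_of_ne_zero hne
    have hmem : (0 : ℕ) ∈ (Finset.range (idxF S u x a)).filter
        (fun k => idxF S u x (u k) = k) := by
      classical
      exact Finset.mem_filter.2 ⟨Finset.mem_range.2 hpos,
        zero_mem_NIF hrefl hsymm htrans hu hu0 x⟩
    have := Finset.card_pos.2 ⟨0, hmem⟩
    rw [labF] at h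
    omega
  have hsp := idxF_spec hrefl hsymm htrans hu hu0 x a
  rw [h0, hu0] at hsp
  exact hsymm hsp

/-- injectivity of labels across classes. -/
theorem labF_inj {x : X} {a b : G} (h : labF S u x a = labF S u x b) :
    relF S x a b := by
  classical
  have key : ∀ {c d : G}, idxF S u x c < idxF S u x d →
      labF S u x c < labF S u x d := by
    intro c d hlt
    unfold labF
    apply Finset.card_lt_card
    rw [Finset.ssubset_iff_of_subset]
    · exact ⟨idxF S u x c, Finset.mem_filter.2 ⟨Finset.mem_range.2 hlt,
        idxF_idem hrefl hsymm htrans hu hu0 x c⟩,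
        fun hmem => by simpa using (Finset.mem_filter.1 hmem).1⟩
    · exact Finset.filter_subset_filter _
        (Finset.range_subset_range.2 (le_of_lt hlt))
  have hmm' : idxF S u x a = idxF S u x b := by
    rcases lt_trichotomy (idxF S u x a) (idxF S u x b) with hlt | heq | hgt
    · exact absurd h (ne_of_lt (key hlt))
    · exact heq
    · exact absurd h.symm (ne_of_lt (key hgt))
  have h1 := idxF_spec hrefl hsymm htrans hu hu0 x a
  have h2 := idxF_spec hrefl hsymm htrans hu hu0 x b
  rw [hmm'] at h1
  exact htrans (hsymm h1) h2

/-- the label bound on `BF n`. -/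
theorem labF_lt {x : X} {n : ℕ} (hx : x ∈ BF S u n) (a : G) : labF S u x a < n := by
  classical
  obtain ⟨hfin, hcard⟩ := hx
  have hTcard : hfin.toFinset.card = n := by
    rw [← Set.ncard_eq_toFinset_card _ hfin]; exact hcard
  have hm : idxF S u x a ∈ hfin.toFinset :=
    hfin.mem_toFinset.2 (idxF_mem_NIF hrefl hsymm htrans hu hu0 x a)
  have hsub : (Finset.range (idxF S u x a)).filter (fun k => idxF S u x (u k) = k)
      ⊆ hfin.toFinset.erase (idxF S u x a) := by
    intro k hk
    obtain ⟨hk1, hk2⟩ := Finset.mem_filter.1 hk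
    exact Finset.mem_erase.2 ⟨Nat.ne_of_lt (Finset.mem_range.1 hk1),
      hfin.mem_toFinset.2 hk2⟩
  have h2 : 0 < hfin.toFinset.card := Finset.card_pos.2 ⟨_, hm⟩
  rw [labF]
  have h1 := Finset.card_le_card hsub
  rw [Finset.card_erase_of_mem hm] at h1
  omega

/-- labels on `BF n` attain all values below `n`. -/
theorem labF_surj {x : X} {n : ℕ} (hx : x ∈ BF S u n) {j : ℕ} (hj : j < n) :
    ∃ k, labF S u x (u k) = j := by
  classical
  obtain ⟨hfin, hcard⟩ := hx
  have hTcard : hfin.toFinset.card = n := by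
    rw [← Set.ncard_eq_toFinset_card _ hfin]; exact hcard
  set f : ℕ → ℕ := fun k => (hfin.toFinset.filter (· < k)).card with hf
  have hlab : ∀ k ∈ hfin.toFinset, labF S u x (u k) = f k := by
    intro k hk
    have hkNI : idxF S u x (u k) = k := hfin.mem_toFinset.1 hk
    rw [labF, hkNI, hf]
    congr 1
    ext k'
    constructor
    · intro hmem
      obtain ⟨h1, h2⟩ := Finset.mem_filter.1 hmem
      exact Finset.mem_filter.2 ⟨hfin.mem_toFinset.2 h2, Finset.mem_range.1 h1⟩
    · intro hmem
      obtain ⟨h1, h2⟩ := Finset.mem_filter.1 hmem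
      exact Finset.mem_filter.2 ⟨Finset.mem_range.2 h2, hfin.mem_toFinset.1 h1⟩
  have hinj : Set.InjOn f ↑hfin.toFinset := by
    intro k hk k' hk' he
    have h1 : labF S u x (u k) = labF S u x (u k') := by
      rw [hlab k hk, hlab k' hk', he]
    have h2 := idxF_eq_of_rel hrefl hsymm htrans hu hu0
      (labF_inj hrefl hsymm htrans hu hu0 h1)
    rwa [hfin.mem_toFinset.1 hk, hfin.mem_toFinset.1 hk'] at h2
  have himg : hfin.toFinset.image f = Finset.range n := by
    apply Finset.eq_of_subset_of_card_le
    · intro j' hj'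
      obtain ⟨k, hk, rfl⟩ := Finset.mem_image.1 hj'
      refine Finset.mem_range.2 ?_
      have hsub : hfin.toFinset.filter (· < k) ⊆ hfin.toFinset.erase k := by
        intro k' hk'
        obtain ⟨h1, h2⟩ := Finset.mem_filter.1 hk'
        exact Finset.mem_erase.2 ⟨Nat.ne_of_lt h2, h1⟩
      have h1 := Finset.card_le_card hsub
      rw [Finset.card_erase_of_mem hk] at h1
      have h2 : 0 < hfin.toFinset.card := Finset.card_pos.2 ⟨_, hk⟩
      have h3 : f k = (hfin.toFinset.filter (· < k)).card := rfl
      rw [h3]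
      omega
    · rw [Finset.card_range, Finset.card_image_of_injOn hinj, hTcard]
  have : j ∈ hfin.toFinset.image f := by
    rw [himg]; exact Finset.mem_range.2 hj
  obtain ⟨k, hk, hfk⟩ := Finset.mem_image.1 this
  exact ⟨k, by rw [hlab k hk, hfk]⟩

open Classical in
theorem labF_ridx {x : X} {n : ℕ} (hx : x ∈ BF S u n) {j : ℕ} (hj : j < n) :
    labF S u x (u (ridxF S u x j)) = j := by
  have hex : ∃ k, labF S u x (u k) = j := labF_surj hrefl hsymm htrans hu hu0 hx hj
  rw [ridxF, dif_pos hex]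
  exact Nat.find_spec hex

/-- the set of new indices shifts bijectively under the action. -/
theorem BF_smul {x : X} {n : ℕ} (hx : x ∈ BF S u n) (g : G) : g • x ∈ BF S u n := by
  obtain ⟨hfin, hcard⟩ := hx
  set θ : ℕ → ℕ := fun k => idxF S u (g • x) (u k * g⁻¹) with hθ
  have hinj : Set.InjOn θ (NIF S u x) := by
    intro k hk k' hk' he
    have h1 : relF S (g • x) (u (θ k)) (u k * g⁻¹) :=
      idxF_spec hrefl hsymm htrans hu hu0 (g • x) _
    have h2 : relF S (g • x) (u (θ k')) (u k' * g⁻¹) :=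
      idxF_spec hrefl hsymm htrans hu hu0 (g • x) _
    rw [he] at h1
    have h3 : relF S (g • x) (u k * g⁻¹) (u k' * g⁻¹) := htrans (hsymm h1) h2
    rw [relF_smul, inv_mul_cancel_right, inv_mul_cancel_right] at h3
    have h4 := idxF_eq_of_rel hrefl hsymm htrans hu hu0 h3
    rwa [hk, hk'] at h4
  have himage : NIF S u (g • x) = θ '' (NIF S u x) := by
    apply Set.Subset.antisymm
    · intro m hm
      refine ⟨idxF S u x (u m * g), idxF_mem_NIF hrefl hsymm htrans hu hu0 x _, ?_⟩
      have h1 : relF S x (u (idxF S u x (u m * g))) (u m * g) :=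
        idxF_spec hrefl hsymm htrans hu hu0 x _
      have h2 : relF S (g • x) (u (idxF S u x (u m * g)) * g⁻¹) (u m) := by
        rw [relF_smul, inv_mul_cancel_right]
        exact h1
      have h3 := idxF_eq_of_rel hrefl hsymm htrans hu hu0 h2
      rw [hm] at h3
      exact h3
    · rintro _ ⟨k, hk, rfl⟩
      exact idxF_mem_NIF hrefl hsymm htrans hu hu0 (g • x) _
  constructor
  · rw [himage]; exact hfin.image θ
  · rw [himage, Set.ncard_image_of_injOn hinj]; exact hcard

theorem FnatF_lt {x : X} {n : ℕ} (hx : x ∈ BF S u n) (g : G) (j : ℕ) :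
    FnatF S u g x j < n :=
  labF_lt hrefl hsymm htrans hu hu0 (BF_smul hrefl hsymm htrans hu hu0 hx g) _

theorem FnatF_cocycle {x : X} {n : ℕ} (hx : x ∈ BF S u n) (g₁ g₂ : G) {j : ℕ}
    (hj : j < n) :
    FnatF S u (g₁ * g₂) x j = FnatF S u g₁ (g₂ • x) (FnatF S u g₂ x j) := by
  have hx2 : g₂ • x ∈ BF S u n := BF_smul hrefl hsymm htrans hu hu0 hx g₂
  set r : G := u (ridxF S u x j) with hr
  have hjr : labF S u x r = j := labF_ridx hrefl hsymm htrans hu hu0 hx hj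
  set j' : ℕ := FnatF S u g₂ x j with hj'def
  have hj'lt : j' < n := FnatF_lt hrefl hsymm htrans hu hu0 hx g₂ j
  set r' : G := u (ridxF S u (g₂ • x) j') with hr'
  have hjr' : labF S u (g₂ • x) r' = j' :=
    labF_ridx hrefl hsymm htrans hu hu0 hx2 hj'lt
  have heq : labF S u (g₂ • x) r' = labF S u (g₂ • x) (r * g₂⁻¹) := by
    rw [hjr']; rfl
  have hrel : relF S (g₂ • x) r' (r * g₂⁻¹) :=
    labF_inj hrefl hsymm htrans hu hu0 heq
  have hrel2 : relF S (g₁ • g₂ • x) (r' * g₁⁻¹) (r * g₂⁻¹ * g₁⁻¹) := by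
    rw [relF_smul, inv_mul_cancel_right, inv_mul_cancel_right]
    exact hrel
  have : FnatF S u (g₁ * g₂) x j = labF S u (g₁ • g₂ • x) (r * g₂⁻¹ * g₁⁻¹) := by
    rw [FnatF, ← hr, mul_smul, mul_inv_rev, ← mul_assoc]
  rw [this, labF_eq_of_rel hrefl hsymm htrans hu hu0 (hsymm hrel2)]
  rfl

theorem FnatF_one {x : X} {n : ℕ} (hx : x ∈ BF S u n) {j : ℕ} (hj : j < n) :
    FnatF S u 1 x j = j := by
  rw [FnatF, one_smul, inv_one, mul_one]
  exact labF_ridx hrefl hsymm htrans hu hu0 hx hj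

theorem BF_pos {x : X} {n : ℕ} (hx : x ∈ BF S u n) : 0 < n := by
  obtain ⟨hfin, hcard⟩ := hx
  rw [← hcard]
  exact (Set.ncard_pos hfin).2 ⟨0, zero_mem_NIF hrefl hsymm htrans hu hu0 x⟩

end Lemmas

/-- the `Fin n`-valued cocycle map. -/
def FfinF (S : Set (X × X)) (u : ℕ → G) (n : ℕ) (g : G) (x : X) : Fin n → Fin n :=
  fun j => if h : FnatF S u g x (j : ℕ) < n then ⟨FnatF S u g x (j : ℕ), h⟩ else j

section Lemmas2
set_option linter.unusedSectionVars false

variable {S : Set (X × X)} {u : ℕ → G}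
  (hrefl : ∀ p : X, (p, p) ∈ S)
  (hsymm : ∀ ⦃p q : X⦄, (p, q) ∈ S → (q, p) ∈ S)
  (htrans : ∀ ⦃p q r : X⦄, (p, q) ∈ S → (q, r) ∈ S → (p, r) ∈ S)
  (hu : Function.Surjective u) (hu0 : u 0 = 1)

include hrefl hsymm htrans hu hu0

theorem FfinF_apply {x : X} {n : ℕ} (hx : x ∈ BF S u n) (g : G) (j : Fin n) :
    FfinF S u n g x j = ⟨FnatF S u g x (j : ℕ),
      FnatF_lt hrefl hsymm htrans hu hu0 hx g (j : ℕ)⟩ :=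
  dif_pos _

theorem FfinF_comp {x : X} {n : ℕ} (hx : x ∈ BF S u n) (g₁ g₂ : G) (j : Fin n) :
    FfinF S u n g₁ (g₂ • x) (FfinF S u n g₂ x j) = FfinF S u n (g₁ * g₂) x j := by
  have hx2 : g₂ • x ∈ BF S u n := BF_smul hrefl hsymm htrans hu hu0 hx g₂
  rw [FfinF_apply hrefl hsymm htrans hu hu0 hx g₂ j,
    FfinF_apply hrefl hsymm htrans hu hu0 hx2 g₁ _,
    FfinF_apply hrefl hsymm htrans hu hu0 hx (g₁ * g₂) j]
  exact Fin.ext (FnatF_cocycle hrefl hsymm htrans hu hu0 hx g₁ g₂ j.isLt).symm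

theorem FfinF_one {x : X} {n : ℕ} (hx : x ∈ BF S u n) (j : Fin n) :
    FfinF S u n 1 x j = j := by
  rw [FfinF_apply hrefl hsymm htrans hu hu0 hx 1 j]
  exact Fin.ext (FnatF_one hrefl hsymm htrans hu hu0 hx j.isLt)

theorem FfinF_left_inv {x : X} {n : ℕ} (hx : x ∈ BF S u n) (g : G) (j : Fin n) :
    FfinF S u n g⁻¹ (g • x) (FfinF S u n g x j) = j := by
  rw [FfinF_comp hrefl hsymm htrans hu hu0 hx g⁻¹ g j, inv_mul_cancel]
  exact FfinF_one hrefl hsymm htrans hu hu0 hx j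

end Lemmas2

open Classical in
/-- the index cocycle with values in `Equiv.Perm (Fin n)`. -/
def cocF {S : Set (X × X)} {u : ℕ → G}
    (hrefl : ∀ p : X, (p, p) ∈ S)
    (hsymm : ∀ ⦃p q : X⦄, (p, q) ∈ S → (q, p) ∈ S)
    (htrans : ∀ ⦃p q r : X⦄, (p, q) ∈ S → (q, r) ∈ S → (p, r) ∈ S)
    (hu : Function.Surjective u) (hu0 : u 0 = 1)
    (n : ℕ) (g : G) (x : X) : Equiv.Perm (Fin n) :=
  if hx : x ∈ BF S u n then
    { toFun := FfinF S u n g x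
      invFun := FfinF S u n g⁻¹ (g • x)
      left_inv := FfinF_left_inv hrefl hsymm htrans hu hu0 hx g
      right_inv := fun j => by
        have h := FfinF_left_inv hrefl hsymm htrans hu hu0
          (BF_smul hrefl hsymm htrans hu hu0 hx g) g⁻¹ j
        rwa [inv_inv, inv_smul_smul] at h }
  else 1

section Lemmas3
set_option linter.unusedSectionVars false

variable {S : Set (X × X)} {u : ℕ → G}
  (hrefl : ∀ p : X, (p, p) ∈ S)
  (hsymm : ∀ ⦃p q : X⦄, (p, q) ∈ S → (q, p) ∈ S)
  (htrans : ∀ ⦃p q r : X⦄, (p, q) ∈ S → (q, r) ∈ S → (p, r) ∈ S)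
  (hu : Function.Surjective u) (hu0 : u 0 = 1)

include hrefl hsymm htrans hu hu0

theorem cocF_apply {x : X} {n : ℕ} (hx : x ∈ BF S u n) (g : G) (j : Fin n) :
    ((cocF hrefl hsymm htrans hu hu0 n g x j : Fin n) : ℕ) = FnatF S u g x (j : ℕ) := by
  rw [cocF, dif_pos hx]
  simp only [Equiv.coe_fn_mk]
  rw [FfinF_apply hrefl hsymm htrans hu hu0 hx g j]

theorem cocF_cocycle (n : ℕ) (g₁ g₂ : G) (x : X) :
    cocF hrefl hsymm htrans hu hu0 n (g₁ * g₂) x =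
      cocF hrefl hsymm htrans hu hu0 n g₁ (g₂ • x) *
        cocF hrefl hsymm htrans hu hu0 n g₂ x := by
  by_cases hx : x ∈ BF S u n
  · have hx2 : g₂ • x ∈ BF S u n := BF_smul hrefl hsymm htrans hu hu0 hx g₂
    apply Equiv.ext
    intro j
    rw [Equiv.Perm.mul_apply]
    apply Fin.ext
    rw [cocF_apply hrefl hsymm htrans hu hu0 hx (g₁ * g₂) j]
    have h1 : (cocF hrefl hsymm htrans hu hu0 n g₂ x j : ℕ) = FnatF S u g₂ x (j : ℕ) :=
      cocF_apply hrefl hsymm htrans hu hu0 hx g₂ j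
    rw [cocF_apply hrefl hsymm htrans hu hu0 hx2 g₁ _, h1]
    exact FnatF_cocycle hrefl hsymm htrans hu hu0 hx g₁ g₂ j.isLt
  · have hx2 : g₂ • x ∉ BF S u n := by
      intro h
      have h2 := BF_smul hrefl hsymm htrans hu hu0 h g₂⁻¹
      rw [inv_smul_smul] at h2
      exact hx h2
    have e1 : cocF hrefl hsymm htrans hu hu0 n (g₁ * g₂) x = 1 := by
      rw [cocF, dif_neg hx]
    have e2 : cocF hrefl hsymm htrans hu hu0 n g₁ (g₂ • x) = 1 := by
      rw [cocF, dif_neg hx2]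
    have e3 : cocF hrefl hsymm htrans hu hu0 n g₂ x = 1 := by
      rw [cocF, dif_neg hx]
    rw [e1, e2, e3, one_mul]

/-- the key computation: the cocycle maps the label of `g` to the label `0`. -/
theorem cocF_lab {x : X} {n : ℕ} (hx : x ∈ BF S u n) (g : G) :
    ((cocF hrefl hsymm htrans hu hu0 n g x
      ⟨labF S u x g, labF_lt hrefl hsymm htrans hu hu0 hx g⟩ : Fin n) : ℕ) = 0 := by
  rw [cocF_apply hrefl hsymm htrans hu hu0 hx g]
  show FnatF S u g x (labF S u x g) = 0
  have h1 : labF S u x (u (ridxF S u x (labF S u x g))) = labF S u x g :=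
    labF_ridx hrefl hsymm htrans hu hu0 hx (labF_lt hrefl hsymm htrans hu hu0 hx g)
  have h2 : relF S x (u (ridxF S u x (labF S u x g))) g :=
    labF_inj hrefl hsymm htrans hu hu0 h1
  have h3 : relF S (g • x) (u (ridxF S u x (labF S u x g)) * g⁻¹) 1 := by
    rw [relF_smul, inv_mul_cancel_right, one_mul]
    exact h2
  rw [FnatF, labF_eq_of_rel hrefl hsymm htrans hu hu0 h3]
  exact labF_one hrefl hsymm htrans hu hu0 (g • x)

end Lemmas3

theorem meas_card_filter {X : Type} [MeasurableSpace X] (P : ℕ → X → Prop)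
    [∀ k x, Decidable (P k x)]
    (hP : ∀ k, MeasurableSet {x | P k x}) :
    ∀ m j : ℕ,
      MeasurableSet {x | ((Finset.range m).filter (fun k => P k x)).card = j} := by
  intro m
  induction m with
  | zero =>
    intro j
    by_cases hj : j = 0
    · have : {x : X | ((Finset.range 0).filter (fun k => P k x)).card = j} = Set.univ := by
        ext x; simp [hj]
      rw [this]; exact MeasurableSet.univ
    · have : {x : X | ((Finset.range 0).filter (fun k => P k x)).card = j} = ∅ := by
        ext x
        simp only [Finset.range_zero, Finset.filter_empty, Finset.card_empty,
          Set.mem_setOf_eq, Set.mem_empty_iff_false, iff_false]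
        exact fun h => hj h.symm
      rw [this]; exact MeasurableSet.empty
  | succ m ih =>
    intro j
    have hsplit : ∀ x : X, ((Finset.range (m + 1)).filter (fun k => P k x)).card
        = ((Finset.range m).filter (fun k => P k x)).card + (if P m x then 1 else 0) := by
      intro x
      rw [Finset.range_add_one, Finset.filter_insert]
      split
      · rw [Finset.card_insert_of_notMem
          (fun hmem => by simpa using (Finset.mem_filter.1 hmem).1)]
      · rw [Nat.add_zero]
    cases j with
    | zero =>
      have heq : {x : X | ((Finset.range (m+1)).filter (fun k => P k x)).card = 0}
          = {x | ¬ P m x} ∩ {x | ((Finset.range m).filter (fun k => P k x)).card = 0} := by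
        ext x
        simp only [Set.mem_setOf_eq, Set.mem_inter_iff]
        rw [hsplit x]
        by_cases h : P m x <;> simp [h]
      rw [heq]
      exact (hP m).compl.inter (ih 0)
    | succ j' =>
      have heq : {x : X | ((Finset.range (m+1)).filter (fun k => P k x)).card = j' + 1}
          = ({x | P m x} ∩ {x | ((Finset.range m).filter (fun k => P k x)).card = j'})
            ∪ ({x | ¬ P m x} ∩
              {x | ((Finset.range m).filter (fun k => P k x)).card = j' + 1}) := by
        ext x
        simp only [Set.mem_setOf_eq, Set.mem_inter_iff, Set.mem_union]
        rw [hsplit x]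
        by_cases h : P m x <;> simp [h]
      rw [heq]
      exact ((hP m).inter (ih j')).union ((hP m).compl.inter (ih (j' + 1)))

section Meas
set_option linter.unusedSectionVars false

variable [MeasurableSpace X] {S : Set (X × X)} {u : ℕ → G}
  (hrefl : ∀ p : X, (p, p) ∈ S)
  (hsymm : ∀ ⦃p q : X⦄, (p, q) ∈ S → (q, p) ∈ S)
  (htrans : ∀ ⦃p q r : X⦄, (p, q) ∈ S → (q, r) ∈ S → (p, r) ∈ S)
  (hu : Function.Surjective u) (hu0 : u 0 = 1)
  (hS : MeasurableSet S)
  (hmeas : ∀ g : G, Measurable fun x : X => g • x)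

include hrefl hsymm htrans hu hu0 hS hmeas

theorem meas_rel (a b : G) : MeasurableSet {x : X | relF S x a b} :=
  ((hmeas a).prodMk (hmeas b)) hS

open Classical in
theorem meas_idx (a : G) (m : ℕ) : MeasurableSet {x : X | idxF S u x a = m} := by
  have heq : {x : X | idxF S u x a = m} =
      {x : X | relF S x (u m) a} ∩ ⋂ (k : Fin m), {x : X | ¬ relF S x (u (k : ℕ)) a} := by
    ext x
    simp only [Set.mem_inter_iff, Set.mem_setOf_eq, Set.mem_iInter]
    rw [idxF_eq_find hrefl hsymm htrans hu hu0, Nat.find_eq_iff]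
    constructor
    · rintro ⟨h1, h2⟩
      exact ⟨h1, fun k => h2 (k : ℕ) k.isLt⟩
    · rintro ⟨h1, h2⟩
      exact ⟨h1, fun k hk => h2 ⟨k, hk⟩⟩
  rw [heq]
  exact (meas_rel hrefl hsymm htrans hu hu0 hS hmeas (u m) a).inter
    (MeasurableSet.iInter fun k =>
      (meas_rel hrefl hsymm htrans hu hu0 hS hmeas (u (k : ℕ)) a).compl)

open Classical in
theorem meas_lab (a : G) (j : ℕ) : MeasurableSet {x : X | labF S u x a = j} := by
  have heq : {x : X | labF S u x a = j} = ⋃ m, ({x : X | idxF S u x a = m} ∩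
      {x : X | ((Finset.range m).filter (fun k => idxF S u x (u k) = k)).card = j}) := by
    ext x
    simp only [Set.mem_iUnion, Set.mem_inter_iff, Set.mem_setOf_eq]
    constructor
    · intro h
      refine ⟨idxF S u x a, rfl, ?_⟩
      rw [← h]
      rfl
    · rintro ⟨m, hm, hc⟩
      rw [labF, hm]
      exact hc
  rw [heq]
  refine MeasurableSet.iUnion fun m =>
    (meas_idx hrefl hsymm htrans hu hu0 hS hmeas a m).inter ?_
  have hm := meas_card_filter (fun k (x : X) => idxF S u x (u k) = k)
    (fun k => meas_idx hrefl hsymm htrans hu hu0 hS hmeas (u k) k) m j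
  exact hm

open Classical in
theorem meas_ridx (j m : ℕ) : MeasurableSet {x : X | ridxF S u x j = m} := by
  by_cases hm : m = 0
  · subst hm
    have heq : {x : X | ridxF S u x j = 0} = {x : X | labF S u x (u 0) = j}
        ∪ ⋂ (k : ℕ), {x : X | ¬ labF S u x (u k) = j} := by
      ext x
      simp only [Set.mem_union, Set.mem_setOf_eq, Set.mem_iInter]
      constructor
      · intro h
        by_cases hex : ∃ k, labF S u x (u k) = j
        · left
          rw [ridxF, dif_pos hex] at h
          have := Nat.find_spec hex
          rwa [h] at this
        · right
          intro k hk
          exact hex ⟨k, hk⟩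
      · rintro (h | h)
        · have hex : ∃ k, labF S u x (u k) = j := ⟨0, h⟩
          rw [ridxF, dif_pos hex]
          exact Nat.le_zero.1 (Nat.find_min' hex h)
        · rw [ridxF, dif_neg (fun hex => by obtain ⟨k, hk⟩ := hex; exact h k hk)]
    rw [heq]
    exact (meas_lab hrefl hsymm htrans hu hu0 hS hmeas (u 0) j).union
      (MeasurableSet.iInter fun k =>
        (meas_lab hrefl hsymm htrans hu hu0 hS hmeas (u k) j).compl)
  · have heq : {x : X | ridxF S u x j = m} = {x : X | labF S u x (u m) = j}
        ∩ ⋂ (k : Fin m), {x : X | ¬ labF S u x (u (k : ℕ)) = j} := by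
      ext x
      simp only [Set.mem_inter_iff, Set.mem_setOf_eq, Set.mem_iInter]
      constructor
      · intro h
        by_cases hex : ∃ k, labF S u x (u k) = j
        · rw [ridxF, dif_pos hex] at h
          obtain ⟨h1, h2⟩ := (Nat.find_eq_iff hex).1 h
          exact ⟨h1, fun k => h2 (k : ℕ) k.isLt⟩
        · rw [ridxF, dif_neg hex] at h
          exact absurd h.symm hm
      · rintro ⟨h1, h2⟩
        have hex : ∃ k, labF S u x (u k) = j := ⟨m, h1⟩
        rw [ridxF, dif_pos hex]
        exact (Nat.find_eq_iff hex).2 ⟨h1, fun k hk => h2 ⟨k, hk⟩⟩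
    rw [heq]
    exact (meas_lab hrefl hsymm htrans hu hu0 hS hmeas (u m) j).inter
      (MeasurableSet.iInter fun k =>
        (meas_lab hrefl hsymm htrans hu hu0 hS hmeas (u (k : ℕ)) j).compl)

theorem meas_Fnat (g : G) (j i : ℕ) : MeasurableSet {x : X | FnatF S u g x j = i} := by
  have heq : {x : X | FnatF S u g x j = i} = ⋃ m, ({x : X | ridxF S u x j = m}
      ∩ (fun x : X => g • x) ⁻¹' {y : X | labF S u y (u m * g⁻¹) = i}) := by
    ext x
    simp only [Set.mem_iUnion, Set.mem_inter_iff, Set.mem_setOf_eq, Set.mem_preimage]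
    constructor
    · intro h
      exact ⟨ridxF S u x j, rfl, h⟩
    · rintro ⟨m, hm, hc⟩
      rw [FnatF, hm]
      exact hc
  rw [heq]
  exact MeasurableSet.iUnion fun m =>
    (meas_ridx hrefl hsymm htrans hu hu0 hS hmeas j m).inter
      ((hmeas g) (meas_lab hrefl hsymm htrans hu hu0 hS hmeas (u m * g⁻¹) i))

open Classical in
theorem meas_BF (n : ℕ) : MeasurableSet (BF S u n) := by
  have heq : BF S u n = ⋃ m, ((⋂ (k : ℕ), {x : X | m ≤ k → ¬ idxF S u x (u k) = k}) ∩
      {x : X | ((Finset.range m).filter (fun k => idxF S u x (u k) = k)).card = n}) := by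
    ext x
    simp only [Set.mem_iUnion, Set.mem_inter_iff, Set.mem_setOf_eq, Set.mem_iInter]
    constructor
    · rintro ⟨hfin, hcard⟩
      obtain ⟨b, hb⟩ := hfin.bddAbove
      refine ⟨b + 1, fun k hk hNI => ?_, ?_⟩
      · have : k ≤ b := hb hNI
        omega
      · have hset : (Finset.range (b + 1)).filter (fun k => idxF S u x (u k) = k)
            = hfin.toFinset := by
          ext k
          simp only [Finset.mem_filter, Finset.mem_range, Set.Finite.mem_toFinset]
          constructor
          · rintro ⟨_, h2⟩
            exact h2
          · intro h
            exact ⟨Nat.lt_succ_of_le (hb h), h⟩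
        rw [hset, ← Set.ncard_eq_toFinset_card _ hfin]
        exact hcard
    · rintro ⟨m, hup, hcard⟩
      have hset : NIF S u x =
          ↑((Finset.range m).filter (fun k => idxF S u x (u k) = k)) := by
        apply Set.Subset.antisymm
        · intro k hk
          simp only [Finset.coe_filter, Finset.mem_range, Set.mem_setOf_eq]
          refine ⟨?_, hk⟩
          by_contra hlt
          exact hup k (Nat.le_of_not_lt hlt) hk
        · intro k hk
          simp only [Finset.coe_filter, Set.mem_setOf_eq] at hk
          exact hk.2
      constructor
      · rw [hset]
        exact Finset.finite_toSet _
      · rw [hset, Set.ncard_coe_finset]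
        exact hcard
  rw [heq]
  refine MeasurableSet.iUnion fun m => MeasurableSet.inter ?_ ?_
  · refine MeasurableSet.iInter fun k => ?_
    by_cases hk : m ≤ k
    · have : {x : X | m ≤ k → ¬ idxF S u x (u k) = k} = {x : X | idxF S u x (u k) = k}ᶜ := by
        ext x; simp [hk]
      rw [this]
      exact (meas_idx hrefl hsymm htrans hu hu0 hS hmeas (u k) k).compl
    · have : {x : X | m ≤ k → ¬ idxF S u x (u k) = k} = Set.univ := by
        ext x; simp [hk]
      rw [this]
      exact MeasurableSet.univ
  · have hm := meas_card_filter (fun k (x : X) => idxF S u x (u k) = k)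
      (fun k => meas_idx hrefl hsymm htrans hu hu0 hS hmeas (u k) k) m n
    exact hm

theorem cocF_eq_iff {x : X} {n : ℕ} (hx : x ∈ BF S u n) (g : G)
    (h : Equiv.Perm (Fin n)) :
    cocF hrefl hsymm htrans hu hu0 n g x = h ↔
      ∀ j : Fin n, FnatF S u g x (j : ℕ) = ((h j : Fin n) : ℕ) := by
  rw [Equiv.ext_iff]
  constructor
  · intro hj j
    rw [← cocF_apply hrefl hsymm htrans hu hu0 hx g j, hj j]
  · intro hj j
    apply Fin.val_injective
    rw [cocF_apply hrefl hsymm htrans hu hu0 hx g j]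
    exact hj j

theorem meas_coc (n : ℕ) (g : G) (h : Equiv.Perm (Fin n)) :
    MeasurableSet {x : X | cocF hrefl hsymm htrans hu hu0 n g x = h} := by
  have hcore : MeasurableSet ((BF S u n) ∩
      ⋂ (j : Fin n), {x : X | FnatF S u g x (j : ℕ) = ((h j : Fin n) : ℕ)}) :=
    (meas_BF hrefl hsymm htrans hu hu0 hS hmeas n).inter
      (MeasurableSet.iInter fun j =>
        meas_Fnat hrefl hsymm htrans hu hu0 hS hmeas g (j : ℕ) ((h j : Fin n) : ℕ))
  by_cases h1 : h = 1
  · subst h1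
    have heq : {x : X | cocF hrefl hsymm htrans hu hu0 n g x = 1} = ((BF S u n) ∩
        ⋂ (j : Fin n), {x : X | FnatF S u g x (j : ℕ) =
          (((1 : Equiv.Perm (Fin n)) j : Fin n) : ℕ)}) ∪ (BF S u n)ᶜ := by
      ext x
      simp only [Set.mem_union, Set.mem_inter_iff, Set.mem_iInter, Set.mem_setOf_eq,
        Set.mem_compl_iff]
      constructor
      · intro hc
        by_cases hx : x ∈ BF S u n
        · exact Or.inl ⟨hx, (cocF_eq_iff hrefl hsymm htrans hu hu0 hS hmeas hx g 1).1 hc⟩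
        · exact Or.inr hx
      · rintro (⟨hx, hj⟩ | hx)
        · exact (cocF_eq_iff hrefl hsymm htrans hu hu0 hS hmeas hx g 1).2 hj
        · rw [cocF, dif_neg hx]
    rw [heq]
    exact hcore.union (meas_BF hrefl hsymm htrans hu hu0 hS hmeas n).compl
  · have heq : {x : X | cocF hrefl hsymm htrans hu hu0 n g x = h} = ((BF S u n) ∩
        ⋂ (j : Fin n), {x : X | FnatF S u g x (j : ℕ) = ((h j : Fin n) : ℕ)}) := by
      ext x
      simp only [Set.mem_inter_iff, Set.mem_iInter, Set.mem_setOf_eq]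
      constructor
      · intro hc
        by_cases hx : x ∈ BF S u n
        · exact ⟨hx, (cocF_eq_iff hrefl hsymm htrans hu hu0 hS hmeas hx g h).1 hc⟩
        · rw [cocF, dif_neg hx] at hc
          exact absurd hc.symm h1
      · rintro ⟨hx, hj⟩
        exact (cocF_eq_iff hrefl hsymm htrans hu hu0 hS hmeas hx g h).2 hj
    rw [heq]
    exact hcore

end Meas

end AuxSR

open MeasureTheory

/-- if a countably infinite group `G` with no nontrivial finite
quotients acts essentially freely, ergodically and p.m.p. on `(X,μ)` and the
action is cocycle superrigid, then the orbit equivalence relation `R` has no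
proper finite-index ergodic subequivalence relation: every ergodic
finite-index `S ≤ R` equals `R` a.e. -/
theorem no_proper_finite_index_ergodic_subrel_of_superrigid
    {X : Type} [MeasurableSpace X] [StandardBorelSpace X]
    (μ : Measure X) [IsProbabilityMeasure μ] [NullSingletonClass μ]
    (G : Type) [Group G] [Countable G] [Infinite G] [MulAction G X]
    (hnofin : ∀ (Q : Type) [Group Q] [Finite Q], ∀ f : G →* Q,
      Function.Surjective f → ∀ g : G, f g = 1)
    (hmeas : ∀ g : G, Measurable fun x : X => g • x)
    (hmp : ∀ g : G, MeasurePreserving (fun x : X => g • x) μ μ)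
    (hfree : ∀ᵐ x ∂μ, ∀ g : G, g • x = x → g = 1)
    (hergodic : ∀ A : Set X, MeasurableSet A →
      (∀ (g : G) (x : X), x ∈ A → g • x ∈ A) → μ A = 0 ∨ μ A = 1)
    (hsr : ∀ (H : Type) [Group H] [Countable H], ∀ c : G → X → H,
      (∀ (h : H) (g : G), MeasurableSet {x | c g x = h}) →
      (∀ (g₁ g₂ : G) (x : X), c (g₁ * g₂) x = c g₁ (g₂ • x) * c g₂ x) →
      ∃ (ρ : G →* H) (φ : X → H), (∀ h : H, MeasurableSet {x | φ x = h}) ∧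
        ∀ g : G, ∀ᵐ x ∂μ, c g x = (φ (g • x))⁻¹ * ρ g * φ x) :
    ∀ S : Set (X × X),
      S ⊆ {p : X × X | ∃ g : G, g • p.2 = p.1} →
      MeasurableSet S →
      (∀ x, (x, x) ∈ S) →
      (∀ ⦃x y⦄, (x, y) ∈ S → (y, x) ∈ S) →
      (∀ ⦃x y z⦄, (x, y) ∈ S → (y, z) ∈ S → (x, z) ∈ S) →
      IsErgodicRel μ S →
      (∀ᵐ x ∂μ, ∃ T : Finset X, ∀ y, (∃ g : G, g • y = x) →
        ∃ z ∈ T, (z, y) ∈ S) →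
      ∀ᵐ x ∂μ, ∀ y, (∃ g : G, g • y = x) → (x, y) ∈ S := by
  intro S hsub hSmeas hrefl hsymm htrans hSerg hfinidx
  classical
  -- helpers converting between measure-one sets and a.e. statements
  have memae : ∀ (A : Set X), MeasurableSet A → μ A = 1 → ∀ᵐ x ∂μ, x ∈ A := by
    intro A hA h1
    exact ae_iff.2 ((prob_compl_eq_zero_iff hA).2 h1)
  have aemem : ∀ (A : Set X), MeasurableSet A → (∀ᵐ x ∂μ, x ∈ A) → μ A = 1 := by
    intro A hA h1
    exact (prob_compl_eq_zero_iff hA).1 (ae_iff.1 h1)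
  -- a surjective enumeration of `G` starting with the identity
  obtain ⟨f, hf⟩ := exists_surjective_nat G
  set u : ℕ → G := fun k => Nat.casesOn k 1 f with hu_def
  have hu : Function.Surjective u := by
    intro a
    obtain ⟨k, hk⟩ := hf a
    exact ⟨k + 1, hk⟩
  have hu0 : u 0 = 1 := rfl
  -- Step 1 : a.e. the number of classes is finite
  have hfinae : ∀ᵐ x ∂μ, (NIF S u x).Finite := by
    refine hfinidx.mono (fun x hx => ?_)
    obtain ⟨T, hT⟩ := hx
    have hfin : Finite ↥(NIF S u x) := by
      have hz : ∀ k : ↥(NIF S u x), ∃ z ∈ T, (z, u ↑k • x) ∈ S :=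
        fun k => hT (u ↑k • x) ⟨(u ↑k)⁻¹, inv_smul_smul _ _⟩
      choose z hzT hzS using hz
      have hinj : Function.Injective fun k : ↥(NIF S u x) => (⟨z k, hzT k⟩ : ↥T) := by
        intro k k' he
        have hzz : z k = z k' := congrArg Subtype.val he
        have hr : relF S x (u ↑k) (u ↑k') := htrans (hsymm (hzS k)) (hzz ▸ hzS k')
        have hid := idxF_eq_of_rel hrefl hsymm htrans hu hu0 hr
        have hk2 : idxF S u x (u ↑k) = ↑k := k.2
        have hk2' : idxF S u x (u ↑k') = ↑k' := k'.2
        rw [hk2, hk2'] at hid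
        exact Subtype.ext hid
      exact Finite.of_injective _ hinj
    exact Set.finite_coe_iff.1 hfin
  -- Step 2 : find the a.e. number of classes `n`
  have hBmeas : ∀ m, MeasurableSet (BF S u m) :=
    fun m => meas_BF hrefl hsymm htrans hu hu0 hSmeas hmeas m
  have hB01 : ∀ m, μ (BF S u m) = 0 ∨ μ (BF S u m) = 1 :=
    fun m => hergodic _ (hBmeas m)
      (fun g x hx => BF_smul hrefl hsymm htrans hu hu0 hx g)
  have hBU : μ (⋃ m, BF S u m) = 1 := by
    refine aemem _ (MeasurableSet.iUnion hBmeas) ?_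
    refine hfinae.mono (fun x hx => ?_)
    exact Set.mem_iUnion.2 ⟨(NIF S u x).ncard, hx, rfl⟩
  have hexn : ∃ m, μ (BF S u m) = 1 := by
    by_contra hno
    push_neg at hno
    have h0 : ∀ m, μ (BF S u m) = 0 := fun m => (hB01 m).resolve_right (hno m)
    rw [measure_iUnion_null h0] at hBU
    exact zero_ne_one hBU
  obtain ⟨n, hBn1⟩ := hexn
  have hBne : (BF S u n).Nonempty := by
    rw [Set.nonempty_iff_ne_empty]
    intro h
    rw [h, measure_empty] at hBn1
    exact zero_ne_one hBn1
  obtain ⟨x0, hx0⟩ := hBne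
  have npos : 0 < n := BF_pos hrefl hsymm htrans hu hu0 hx0
  set z0 : Fin n := ⟨0, npos⟩ with hz0
  -- Step 3 : apply cocycle superrigidity to the index cocycle
  obtain ⟨ρ, φ, hφ, huntw⟩ := hsr (Equiv.Perm (Fin n))
    (cocF hrefl hsymm htrans hu hu0 n)
    (fun h g => meas_coc hrefl hsymm htrans hu hu0 hSmeas hmeas n g h)
    (fun g₁ g₂ x => cocF_cocycle hrefl hsymm htrans hu hu0 n g₁ g₂ x)
  -- Step 4 : the homomorphism is trivial
  have hρ1 : ∀ g : G, ρ g = 1 := by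
    intro g
    have h1 := hnofin ↥ρ.range ρ.rangeRestrict ρ.rangeRestrict_surjective g
    have h2 := congrArg Subtype.val h1
    simpa using h2
  -- Step 5 : the good set
  set E : G → Set X := fun g =>
    {x | cocF hrefl hsymm htrans hu hu0 n g x = (φ (g • x))⁻¹ * φ x} with hE
  have hEmeas : ∀ g, MeasurableSet (E g) := by
    intro g
    have heq : E g = ⋃ (h1 : Equiv.Perm (Fin n)), ⋃ (h2 : Equiv.Perm (Fin n)),
        (((fun x : X => g • x) ⁻¹' {y | φ y = h1}) ∩ {x | φ x = h2} ∩
          {x | cocF hrefl hsymm htrans hu hu0 n g x = h1⁻¹ * h2}) := by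
      ext x
      simp only [hE, Set.mem_iUnion, Set.mem_inter_iff, Set.mem_preimage,
        Set.mem_setOf_eq]
      constructor
      · intro h
        exact ⟨φ (g • x), φ x, ⟨rfl, rfl⟩, h⟩
      · rintro ⟨h1, h2, ⟨ha, hb⟩, hc⟩
        rw [ha, hb]
        exact hc
    rw [heq]
    exact MeasurableSet.iUnion fun h1 => MeasurableSet.iUnion fun h2 =>
      (((hmeas g) (hφ h1)).inter (hφ h2)).inter
        (meas_coc hrefl hsymm htrans hu hu0 hSmeas hmeas n g (h1⁻¹ * h2))
  set GS : Set X := BF S u n ∩ ⋂ (g : G), E g with hGSdef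
  have hGSmeas : MeasurableSet GS := (hBmeas n).inter (MeasurableSet.iInter hEmeas)
  have hGSae : ∀ᵐ x ∂μ, x ∈ GS := by
    have h1 : ∀ᵐ x ∂μ, x ∈ BF S u n := memae _ (hBmeas n) hBn1
    have h2 : ∀ᵐ x ∂μ, ∀ g : G, x ∈ E g := by
      rw [ae_all_iff]
      intro g
      refine (huntw g).mono (fun x hx => ?_)
      show cocF hrefl hsymm htrans hu hu0 n g x = (φ (g • x))⁻¹ * φ x
      rw [hx, hρ1 g, mul_one]
    exact (h1.and h2).mono (fun x hx => ⟨hx.1, Set.mem_iInter.2 hx.2⟩)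
  have hGS1 : μ GS = 1 := aemem _ hGSmeas hGSae
  set Good : Set X := ⋂ (g : G), (fun x : X => g • x) ⁻¹' GS with hGooddef
  have hGoodmeas : MeasurableSet Good := MeasurableSet.iInter fun g => (hmeas g) hGSmeas
  have hGoodae : ∀ᵐ x ∂μ, x ∈ Good := by
    have h1 : ∀ᵐ x ∂μ, ∀ g : G, g • x ∈ GS := by
      rw [ae_all_iff]
      intro g
      have hpre : μ ((fun x : X => g • x) ⁻¹' GS) = 1 := by
        rw [(hmp g).measure_preimage hGSmeas.nullMeasurableSet]
        exact hGS1
      exact memae _ ((hmeas g) hGSmeas) hpre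
    exact h1.mono (fun x hx => Set.mem_iInter.2 hx)
  have hGoodsub : Good ⊆ GS := by
    intro x hx
    have h1 := Set.mem_iInter.1 hx 1
    rwa [Set.mem_preimage, one_smul] at h1
  have hGoodinv : ∀ (g : G) (x : X), x ∈ Good → g • x ∈ Good := by
    intro g x hx
    refine Set.mem_iInter.2 (fun g' => ?_)
    have h1 := Set.mem_iInter.1 hx (g' * g)
    rw [Set.mem_preimage] at h1 ⊢
    rwa [mul_smul] at h1
  -- the key pointwise consequence of untwisting
  have hLemA : ∀ x, x ∈ GS → ∀ (g : G) (hlt : labF S u x g < n),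
      φ x ⟨labF S u x g, hlt⟩ = φ (g • x) z0 := by
    intro x hx g hlt
    have hxB : x ∈ BF S u n := hx.1
    have hx2 : cocF hrefl hsymm htrans hu hu0 n g x = (φ (g • x))⁻¹ * φ x :=
      Set.mem_iInter.1 hx.2 g
    have h1 : cocF hrefl hsymm htrans hu hu0 n g x ⟨labF S u x g, hlt⟩ = z0 := by
      apply Fin.val_injective
      exact cocF_lab hrefl hsymm htrans hu hu0 hxB g
    rw [hx2, Equiv.Perm.mul_apply] at h1
    have h2 := congrArg (φ (g • x)) h1
    rwa [← Equiv.Perm.mul_apply, mul_inv_cancel, Equiv.Perm.one_apply] at h2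
  -- the finitely many S-invariant pieces
  set A : Fin n → Set X := fun j => Good ∩ {x | φ x z0 = j} with hAdef
  have hAmeas : ∀ j, MeasurableSet (A j) := by
    intro j
    refine hGoodmeas.inter ?_
    have heq : {x : X | φ x z0 = j} = ⋃ (h : Equiv.Perm (Fin n)),
        (if h z0 = j then {x | φ x = h} else ∅) := by
      ext x
      simp only [Set.mem_iUnion, Set.mem_setOf_eq]
      constructor
      · intro hx
        refine ⟨φ x, ?_⟩
        rw [if_pos hx]
        exact rfl
      · rintro ⟨h, hx⟩
        by_cases hc : h z0 = j
        · rw [if_pos hc] at hx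
          simp only [Set.mem_setOf_eq] at hx
          rw [hx]
          exact hc
        · rw [if_neg hc] at hx
          exact absurd hx (Set.notMem_empty x)
    rw [heq]
    refine MeasurableSet.iUnion fun h => ?_
    by_cases hc : h z0 = j
    · rw [if_pos hc]; exact hφ h
    · rw [if_neg hc]; exact MeasurableSet.empty
  have hAinv : ∀ j, ∀ x ∈ A j, ∀ y, (x, y) ∈ S → y ∈ A j := by
    intro j x hx y hxy
    obtain ⟨g, hg⟩ := hsub hxy
    dsimp only at hg
    have hy : y ∈ Good := by
      have h1 := hGoodinv g⁻¹ x hx.1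
      rw [← hg, inv_smul_smul] at h1
      exact h1
    refine ⟨hy, ?_⟩
    have hyGS : y ∈ GS := hGoodsub hy
    have hrel : relF S y g 1 := by
      show (g • y, (1 : G) • y) ∈ S
      rw [one_smul, hg]
      exact hxy
    have hlab : labF S u y g = 0 :=
      (labF_eq_of_rel hrefl hsymm htrans hu hu0 hrel).trans
        (labF_one hrefl hsymm htrans hu hu0 y)
    have hlt : labF S u y g < n := labF_lt hrefl hsymm htrans hu hu0 hyGS.1 g
    have h2 := hLemA y hyGS g hlt
    have h3 : (⟨labF S u y g, hlt⟩ : Fin n) = z0 := Fin.val_injective hlab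
    rw [h3] at h2
    show φ y z0 = j
    rw [h2, hg]
    exact hx.2
  have hA01 : ∀ j, μ (A j) = 0 ∨ μ (A j) = 1 :=
    fun j => hSerg (A j) (hAmeas j) (hAinv j)
  have hGoodU : Good = ⋃ j : Fin n, A j := by
    ext x
    simp only [Set.mem_iUnion, hAdef, Set.mem_inter_iff, Set.mem_setOf_eq]
    constructor
    · intro hx
      exact ⟨φ x z0, hx, rfl⟩
    · rintro ⟨j, hx, _⟩
      exact hx
  have hexj : ∃ j : Fin n, μ (A j) = 1 := by
    by_contra hno
    push_neg at hno
    have h0 : ∀ j, μ (A j) = 0 := fun j => (hA01 j).resolve_right (hno j)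
    have hg1 := aemem Good hGoodmeas hGoodae
    rw [hGoodU, measure_iUnion_null h0] at hg1
    exact zero_ne_one hg1
  obtain ⟨j0, hj0⟩ := hexj
  -- final a.e. statement
  have hAj0ae : ∀ᵐ x ∂μ, x ∈ A j0 := memae _ (hAmeas j0) hj0
  have hprej0 : ∀ᵐ x ∂μ, ∀ g : G, g • x ∈ A j0 := by
    rw [ae_all_iff]
    intro g
    have hpre : μ ((fun x : X => g • x) ⁻¹' (A j0)) = 1 := by
      rw [(hmp g).measure_preimage (hAmeas j0).nullMeasurableSet]
      exact hj0
    exact memae _ ((hmeas g) (hAmeas j0)) hpre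
  refine ((hGSae.and (hAj0ae.and hprej0)).mono ?_)
  rintro x ⟨hxGS, hxA, hxpre⟩ y ⟨g, hg⟩
  have hy : y = g⁻¹ • x := by rw [← hg, inv_smul_smul]
  have hk : g⁻¹ • x ∈ A j0 := hxpre g⁻¹
  have hlt : labF S u x g⁻¹ < n := labF_lt hrefl hsymm htrans hu hu0 hxGS.1 g⁻¹
  have h2 := hLemA x hxGS g⁻¹ hlt
  have h3 : φ x (⟨labF S u x g⁻¹, hlt⟩ : Fin n) = φ x z0 := by
    rw [h2, hk.2]
    exact hxA.2.symm
  have h4 : (⟨labF S u x g⁻¹, hlt⟩ : Fin n) = z0 := (φ x).injective h3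
  have h5 : labF S u x g⁻¹ = 0 := congrArg Fin.val h4
  have h6 : relF S x g⁻¹ 1 := labF_eq_zero_rel hrefl hsymm htrans hu hu0 h5
  have h7 : (g⁻¹ • x, (1 : G) • x) ∈ S := h6
  rw [one_smul] at h7
  rw [hy]
  exact hsymm h7
end
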